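/- arXiv:2004.08060 — 8 statements merged into one kernel-verified Lean document; each statement's English description precedes it below -/
import Mathlib

section
/- Let M be a nonempty set, let T > 0, and let H : M × [0,T) → ℝ be a function such that for every t ∈ [0,T) the supremum of H over M × [0,t] is finite. Let B ⊆ M × [0,T) be any subset, and let j > 0 be a real number. If there exists a point (p,t) ∈ B with H(p,t) ≥ j, then there exists a point (p₀,t₀) ∈ B with H(p₀,t₀) ≥ j and with the additional property that every (q,s) ∈ M × [0,T) with s ≤ t₀ and H(q,s) ≥ 4·H(p₀,t₀) satisfies (q,s) ∉ B. -/
/-- Perelman-style point picking: if the set `B` of "bad" spacetime points in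
`M × [0,T)` contains a point with `H ≥ j`, and `H` is bounded on every slab
`M × [0,t]` with `t < T`, then there is a bad point `(p₀,t₀)` with `H ≥ j` such
that every spacetime point `(q,s)` with `s ≤ t₀` and `H(q,s) ≥ 4·H(p₀,t₀)` is good. -/
theorem point_picking {M : Type*} [Nonempty M] (T : ℝ) (hT : 0 < T)
    (H : M → ℝ → ℝ)
    (hbdd : ∀ t, 0 ≤ t → t < T → ∃ C : ℝ, ∀ p : M, ∀ s : ℝ, 0 ≤ s → s ≤ t → H p s ≤ C)
    (B : Set (M × ℝ)) (hB : ∀ x ∈ B, 0 ≤ x.2 ∧ x.2 < T)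
    (j : ℝ) (hj : 0 < j)
    (hex : ∃ p : M, ∃ t : ℝ, (p, t) ∈ B ∧ j ≤ H p t) :
    ∃ p₀ : M, ∃ t₀ : ℝ, (p₀, t₀) ∈ B ∧ j ≤ H p₀ t₀ ∧
      ∀ q : M, ∀ s : ℝ, 0 ≤ s → s < T → s ≤ t₀ → 4 * H p₀ t₀ ≤ H q s → (q, s) ∉ B := by
  by_contra hcon
  push_neg at hcon
  obtain ⟨p, t, hpB, hpH⟩ := hex
  obtain ⟨ht0, htT⟩ := hB _ hpB
  obtain ⟨C, hC⟩ := hbdd t ht0 htT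
  -- iterate: for every n there is a bad point in the slab with H ≥ 4^n * j
  have key : ∀ n : ℕ, ∃ p' : M, ∃ t' : ℝ, (p', t') ∈ B ∧ t' ≤ t ∧ 4 ^ n * j ≤ H p' t' := by
    intro n
    induction n with
    | zero => exact ⟨p, t, hpB, le_refl t, by simpa using hpH⟩
    | succ n ih =>
      obtain ⟨p', t', hB', ht', hH'⟩ := ih
      have hjH : j ≤ H p' t' := le_trans (le_mul_of_one_le_left hj.le (one_le_pow₀ (by norm_num))) hH'
      obtain ⟨q, s, hs0, hsT, hst, hHq, hqB⟩ := hcon p' t' hB' hjH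
      refine ⟨q, s, hqB, le_trans hst ht', ?_⟩
      calc 4 ^ (n + 1) * j = 4 * (4 ^ n * j) := by ring
        _ ≤ 4 * H p' t' := by nlinarith
        _ ≤ H q s := hHq
  obtain ⟨n, hn⟩ := pow_unbounded_of_one_lt (C / j) (by norm_num : (1:ℝ) < 4)
  obtain ⟨p', t', hB', ht', hH'⟩ := key n
  have h0 := (hB _ hB').1
  have := hC p' t' h0 ht'
  have hClt : C < 4 ^ n * j := by
    have := (div_lt_iff₀ hj).mp hn
    linarith
  linarith
end

section
/- Let n ≥ 2 be an integer, u* > 0, and C > 0. Let 𝓗 : (0, u*] → ℝ be differentiable with 𝓗'(u) ≤ −𝓗(u)²/(n−1) for all u ∈ (0,u*], and let a : (0, u*] → ℝ be differentiable with a(u) > 0 and a'(u) = 𝓗(u)·a(u) for all u ∈ (0,u*]. Assume in addition that a(u) ≤ C·u^{n−1} for all u ∈ (0,u*]. Then the function u ↦ u^{1−n}·a(u) is non-increasing on (0, u*], and it converges as u → 0⁺ to a finite limit L satisfying 0 < (u*)^{1−n}·a(u*) ≤ L ≤ C. -/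
open Set Filter

/-- Monotonicity and convergence of the area ratio `u^{1-n}·a(u)` for the CMC
foliation: if `𝓗' ≤ -𝓗²/(n-1)`, `a > 0`, `a' = 𝓗·a`, and `a(u) ≤ C·u^{n-1}`,
then `u ↦ a(u)/u^{n-1}` is non-increasing on `(0,u*]` and converges as `u → 0⁺`
to a finite limit `L` with `0 < a(u*)/u*^{n-1} ≤ L ≤ C`. -/
theorem area_ratio_monotone_limit (n : ℕ) (hn : 2 ≤ n) (ustar C : ℝ)
    (hustar : 0 < ustar) (hC : 0 < C)
    (𝓗 𝓗' a : ℝ → ℝ)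
    (h𝓗deriv : ∀ u ∈ Ioc (0 : ℝ) ustar, HasDerivAt 𝓗 (𝓗' u) u)
    (h𝓗ineq : ∀ u ∈ Ioc (0 : ℝ) ustar, 𝓗' u ≤ -(𝓗 u) ^ 2 / ((n : ℝ) - 1))
    (hapos : ∀ u ∈ Ioc (0 : ℝ) ustar, 0 < a u)
    (haderiv : ∀ u ∈ Ioc (0 : ℝ) ustar, HasDerivAt a (𝓗 u * a u) u)
    (habound : ∀ u ∈ Ioc (0 : ℝ) ustar, a u ≤ C * u ^ (n - 1)) :
    AntitoneOn (fun u => a u / u ^ (n - 1)) (Ioc (0 : ℝ) ustar) ∧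
    ∃ L : ℝ, Tendsto (fun u => a u / u ^ (n - 1)) (nhdsWithin 0 (Ioi (0 : ℝ))) (nhds L) ∧
      0 < a ustar / ustar ^ (n - 1) ∧ a ustar / ustar ^ (n - 1) ≤ L ∧ L ≤ C := by
  set m : ℕ := n - 1 with hm_def
  have hm1 : 1 ≤ m := by omega
  have hmcast : ((m : ℝ)) = (n : ℝ) - 1 := by
    have : ((m : ℕ) : ℝ) = ((n : ℕ) : ℝ) - 1 := by
      rw [hm_def, Nat.cast_sub (by omega)]; norm_num
    simpa using this
  have hmpos : (0 : ℝ) < (m : ℝ) := by positivity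
  set r : ℝ := 1 / (m : ℝ) with hr_def
  have hrpos : 0 < r := by positivity
  have hrm : r * (m : ℝ) = 1 := by
    rw [hr_def, one_div, inv_mul_cancel₀ hmpos.ne']
  -- the auxiliary function q = a^(1/(n-1)) extended by 0
  set q : ℝ → ℝ := fun u => if 0 < u then a u ^ r else 0 with hq_def
  have hq0 : q 0 = 0 := by simp [hq_def]
  have hq_eq : ∀ u ∈ Ioc (0 : ℝ) ustar, q u = a u ^ r := fun u hu => by
    simp [hq_def, hu.1]
  have hqpos : ∀ u ∈ Ioc (0 : ℝ) ustar, 0 < q u := fun u hu => by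
    rw [hq_eq u hu]; exact Real.rpow_pos_of_pos (hapos u hu) r
  -- derivative of q on (0, u*]
  have hqderiv : ∀ u ∈ Ioc (0 : ℝ) ustar, HasDerivAt q (r * 𝓗 u * a u ^ r) u := by
    intro u hu
    have hP : HasDerivAt (fun v => a v ^ r) ((𝓗 u * a u) * r * a u ^ (r - 1)) u :=
      (haderiv u hu).rpow_const (Or.inl (ne_of_gt (hapos u hu)))
    have key : (𝓗 u * a u) * r * a u ^ (r - 1) = r * 𝓗 u * a u ^ r := by
      have : a u ^ r = a u * a u ^ (r - 1) := by
        rw [← Real.rpow_one_add' (le_of_lt (hapos u hu)) ?_]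
        · ring_nf
        · intro h; rw [show (1 : ℝ) + (r - 1) = r by ring] at h
          exact (ne_of_gt hrpos) h
      rw [this]; ring
    rw [key] at hP
    have hev : q =ᶠ[nhds u] fun v => a v ^ r := by
      filter_upwards [Ioi_mem_nhds hu.1] with v hv
      simp [hq_def, mem_Ioi.mp hv]
    exact hP.congr_of_eventuallyEq hev
  -- the a priori bound transferred to q
  have hqbound : ∀ u ∈ Icc (0 : ℝ) ustar, q u ≤ C ^ r * u := by
    intro u hu
    rcases eq_or_lt_of_le hu.1 with h | h
    · simp [hq_def, ← h]
    · have hu' : u ∈ Ioc (0 : ℝ) ustar := ⟨h, hu.2⟩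
      rw [hq_eq u hu']
      calc a u ^ r ≤ (C * u ^ m) ^ r := by
            exact Real.rpow_le_rpow (le_of_lt (hapos u hu')) (habound u hu') (le_of_lt hrpos)
        _ = C ^ r * u := by
            rw [Real.mul_rpow (le_of_lt hC) (by positivity)]
            congr 1
            rw [← Real.rpow_natCast u m, ← Real.rpow_mul (le_of_lt h)]
            rw [show (m : ℝ) * r = 1 by rw [mul_comm]; exact hrm, Real.rpow_one]
  -- continuity of q on [0, u*]
  have hqcont : ContinuousOn q (Icc 0 ustar) := by
    intro u hu
    rcases eq_or_lt_of_le hu.1 with h | h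
    · -- continuity at 0 via squeeze
      rw [← h]
      have h1 : Tendsto (fun v : ℝ => C ^ r * v) (nhdsWithin 0 (Icc (0:ℝ) ustar)) (nhds 0) := by
        have h2 : Continuous (fun v : ℝ => C ^ r * v) := continuous_const.mul continuous_id
        have := h2.tendsto (0 : ℝ)
        simp only [mul_zero] at this
        exact this.mono_left nhdsWithin_le_nhds
      have : Tendsto q (nhdsWithin 0 (Icc (0:ℝ) ustar)) (nhds 0) := by
        apply squeeze_zero'
        · filter_upwards [self_mem_nhdsWithin] with v hv
          rcases eq_or_lt_of_le (hv.1 : (0:ℝ) ≤ v) with h' | h'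
          · simp [hq_def, ← h']
          · exact le_of_lt (hqpos v ⟨h', hv.2⟩)
        · filter_upwards [self_mem_nhdsWithin] with v hv
          exact hqbound v hv
        · exact h1
      simpa [ContinuousWithinAt, hq0, ← h] using this
    · exact ((hqderiv u ⟨h, hu.2⟩).continuousAt).continuousWithinAt
  -- concavity of q on [0, u*]
  have hint : interior (Icc (0:ℝ) ustar) = Ioo 0 ustar := interior_Icc
  have hIooIoc : Ioo (0:ℝ) ustar ⊆ Ioc 0 ustar := Ioo_subset_Ioc_self
  -- the candidate derivative function
  set g : ℝ → ℝ := fun u => r * 𝓗 u * a u ^ r with hg_def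
  have hganti : AntitoneOn g (Ioo (0:ℝ) ustar) := by
    apply antitoneOn_of_deriv_nonpos (convex_Ioo 0 ustar)
    · -- continuity
      intro u hu
      have hu' := hIooIoc hu
      have hP : HasDerivAt (fun v => a v ^ r) (r * 𝓗 u * a u ^ r) u := by
        have := (hqderiv u hu')
        have hev : q =ᶠ[nhds u] fun v => a v ^ r := by
          filter_upwards [Ioi_mem_nhds hu'.1] with v hv
          simp [hq_def, mem_Ioi.mp hv]
        exact this.congr_of_eventuallyEq hev.symm
      exact (((h𝓗deriv u hu').continuousAt.mul hP.continuousAt).const_smul r).continuousWithinAt.congr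
        (fun v _ => by simp [hg_def, smul_eq_mul, mul_assoc]) (by simp [hg_def, smul_eq_mul, mul_assoc])
    · rw [interior_Ioo]
      intro u hu
      have hu' := hIooIoc hu
      have hP : HasDerivAt (fun v => a v ^ r) (r * 𝓗 u * a u ^ r) u := by
        have hev : q =ᶠ[nhds u] fun v => a v ^ r := by
          filter_upwards [Ioi_mem_nhds hu'.1] with v hv
          simp [hq_def, mem_Ioi.mp hv]
        exact (hqderiv u hu').congr_of_eventuallyEq hev.symm
      have : HasDerivAt g (r * (𝓗' u * a u ^ r + 𝓗 u * (r * 𝓗 u * a u ^ r))) u := by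
        have := ((h𝓗deriv u hu').mul hP).const_mul r
        simpa [hg_def, mul_assoc] using this
      exact this.differentiableAt.differentiableWithinAt
    · rw [interior_Ioo]
      intro u hu
      have hu' := hIooIoc hu
      have hP : HasDerivAt (fun v => a v ^ r) (r * 𝓗 u * a u ^ r) u := by
        have hev : q =ᶠ[nhds u] fun v => a v ^ r := by
          filter_upwards [Ioi_mem_nhds hu'.1] with v hv
          simp [hq_def, mem_Ioi.mp hv]
        exact (hqderiv u hu').congr_of_eventuallyEq hev.symm
      have hg' : HasDerivAt g (r * (𝓗' u * a u ^ r + 𝓗 u * (r * 𝓗 u * a u ^ r))) u := by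
        have := ((h𝓗deriv u hu').mul hP).const_mul r
        simpa [hg_def, mul_assoc] using this
      rw [hg'.deriv]
      have hPpos : (0:ℝ) < a u ^ r := Real.rpow_pos_of_pos (hapos u hu') r
      have hineq := h𝓗ineq u hu'
      have hr𝓗 : 𝓗' u + r * (𝓗 u) ^ 2 ≤ 0 := by
        have : -(𝓗 u) ^ 2 / ((n:ℝ) - 1) = -(r * (𝓗 u) ^ 2) := by
          rw [← hmcast]; field_simp [hr_def]
          linear_combination (𝓗 u) ^ 2 * hrm
        rw [this] at hineq; linarith
      have : r * (𝓗' u * a u ^ r + 𝓗 u * (r * 𝓗 u * a u ^ r))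
          = r * (a u ^ r) * (𝓗' u + r * (𝓗 u) ^ 2) := by ring
      rw [this]
      exact mul_nonpos_of_nonneg_of_nonpos (by positivity) hr𝓗
  have hqanti : AntitoneOn (deriv q) (interior (Icc (0:ℝ) ustar)) := by
    rw [hint]
    intro x hx y hy hxy
    rw [(hqderiv x (hIooIoc hx)).deriv, (hqderiv y (hIooIoc hy)).deriv]
    exact hganti hx hy hxy
  have hconc : ConcaveOn ℝ (Icc (0:ℝ) ustar) q := by
    apply AntitoneOn.concaveOn_of_deriv (convex_Icc 0 ustar) hqcont
    · rw [hint]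
      exact fun u hu => (hqderiv u (hIooIoc hu)).differentiableAt.differentiableWithinAt
    · exact hqanti
  -- the slope inequality: for 0 < u ≤ v ≤ u*, q u / u ≥ q v / v
  have hslope : ∀ u ∈ Ioc (0:ℝ) ustar, ∀ v ∈ Ioc (0:ℝ) ustar, u ≤ v →
      q v / v ≤ q u / u := by
    intro u hu v hv huv
    have hvpos : (0:ℝ) < v := hv.1
    have hupos : (0:ℝ) < u := hu.1
    have h0 : (0:ℝ) ∈ Icc (0:ℝ) ustar := ⟨le_refl 0, le_of_lt hustar⟩
    have hvI : v ∈ Icc (0:ℝ) ustar := ⟨le_of_lt hvpos, hv.2⟩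
    have ht1 : (0:ℝ) ≤ 1 - u / v := by
      have : u / v ≤ 1 := (div_le_one hvpos).mpr huv
      linarith
    have ht2 : (0:ℝ) ≤ u / v := le_of_lt (div_pos hupos hvpos)
    have hcomb := hconc.2 h0 hvI ht1 ht2 (by ring)
    have harg : (1 - u / v) • (0:ℝ) + (u / v) • v = u := by
      field_simp
      rw [smul_zero, zero_add, smul_eq_mul, div_mul_cancel₀ u hvpos.ne']
    rw [harg, hq0] at hcomb
    have : (u / v) * q v ≤ q u := by
      simpa [smul_eq_mul] using hcomb
    rw [div_le_div_iff₀ hvpos hupos]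
    calc q v * u = u / v * q v * v := by field_simp
      _ ≤ q u * v := by
          exact mul_le_mul_of_nonneg_right this (le_of_lt hvpos)
  -- relate q back to a : (q u)^m = a u, so a u / u^m = (q u / u)^m
  have hqa : ∀ u ∈ Ioc (0:ℝ) ustar, q u ^ m = a u := by
    intro u hu
    rw [hq_eq u hu, ← Real.rpow_natCast (a u ^ r) m,
      ← Real.rpow_mul (le_of_lt (hapos u hu)), hrm, Real.rpow_one]
  have hfq : ∀ u ∈ Ioc (0:ℝ) ustar, a u / u ^ m = (q u / u) ^ m := by
    intro u hu
    rw [div_pow, hqa u hu]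
  -- the monotonicity statement
  have hanti : AntitoneOn (fun u => a u / u ^ (n - 1)) (Ioc (0 : ℝ) ustar) := by
    intro u hu v hv huv
    simp only [← hm_def]
    rw [hfq u hu, hfq v hv]
    have h1 : q v / v ≤ q u / u := hslope u hu v hv huv
    have h2 : (0:ℝ) ≤ q v / v := div_nonneg (le_of_lt (hqpos v hv)) (le_of_lt hv.1)
    exact pow_le_pow_left₀ h2 h1 m
  refine ⟨hanti, ?_⟩
  -- the function values are bounded above by C
  have hfub : ∀ u ∈ Ioc (0:ℝ) ustar, a u / u ^ m ≤ C := by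
    intro u hu
    rw [div_le_iff₀ (pow_pos hu.1 m)]
    exact habound u hu
  have hne : (Ioo (0:ℝ) ustar).Nonempty := ⟨ustar / 2, by constructor <;> linarith⟩
  have hantiIoo : AntitoneOn (fun u => a u / u ^ (n - 1)) (Ioo (0:ℝ) ustar) :=
    hanti.mono hIooIoc
  have hbddA : BddAbove ((fun u => a u / u ^ (n - 1)) '' Ioo (0:ℝ) ustar) := by
    refine ⟨C, ?_⟩
    rintro y ⟨u, hu, rfl⟩
    exact hfub u (hIooIoc hu)
  have htend := hantiIoo.tendsto_nhdsWithin_Ioo_right hne hbddA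
  refine ⟨sSup ((fun u => a u / u ^ (n - 1)) '' Ioo (0:ℝ) ustar), htend, ?_, ?_, ?_⟩
  · have := hapos ustar ⟨hustar, le_refl _⟩
    positivity
  · have hmem : ustar / 2 ∈ Ioo (0:ℝ) ustar := ⟨by linarith, by linarith⟩
    have h1 : a ustar / ustar ^ (n - 1) ≤ a (ustar/2) / (ustar/2) ^ (n - 1) :=
      hanti (hIooIoc hmem) ⟨hustar, le_refl _⟩ (by linarith)
    exact h1.trans (le_csSup hbddA ⟨ustar/2, hmem, rfl⟩)
  · apply csSup_le (hne.image _)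
    rintro y ⟨u, hu, rfl⟩
    exact hfub u (hIooIoc hu)
end

section
/- Let n ≥ 2 be an integer, let Λ > 0, ℓ > 0, and 0 < r₀ ≤ ℓ/2. Let R : [0,ℓ] → ℝ be a continuous function with R(s) ≤ Λ² for all s ∈ [0,ℓ]. Assume the inequality 0 ≤ ∫₀^{r₀} ((n−1)/r₀² − (s²/r₀²)·R(s)) ds − ∫_{r₀}^{ℓ−r₀} R(s) ds + ∫_{ℓ−r₀}^{ℓ} ((n−1)/r₀² − ((ℓ−s)²/r₀²)·R(s)) ds. Then ∫₀^{ℓ} R(s) ds ≤ 2(n−1)/r₀ + (4/3)·Λ²·r₀. -/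
open Set intervalIntegral

/-- Perelman's second variation argument: if `R ≤ Λ²` on `[0,ℓ]` and the second
variation integral inequality holds for the piecewise linear cutoff supported at
scale `r₀`, then `∫₀^ℓ R ≤ 2(n-1)/r₀ + (4/3)Λ²r₀`. -/
theorem second_variation_ricci_bound (n : ℕ) (hn : 2 ≤ n)
    (Λ ℓ r₀ : ℝ) (hΛ : 0 < Λ) (hℓ : 0 < ℓ) (hr₀ : 0 < r₀) (hr₀ℓ : r₀ ≤ ℓ / 2)
    (R : ℝ → ℝ) (hRcont : ContinuousOn R (Icc 0 ℓ))
    (hRbound : ∀ s ∈ Icc (0 : ℝ) ℓ, R s ≤ Λ ^ 2)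
    (hineq : 0 ≤ (∫ s in (0 : ℝ)..r₀, (((n : ℝ) - 1) / r₀ ^ 2 - s ^ 2 / r₀ ^ 2 * R s))
        - (∫ s in r₀..(ℓ - r₀), R s)
        + ∫ s in (ℓ - r₀)..ℓ, (((n : ℝ) - 1) / r₀ ^ 2 - (ℓ - s) ^ 2 / r₀ ^ 2 * R s)) :
    (∫ s in (0 : ℝ)..ℓ, R s) ≤ 2 * ((n : ℝ) - 1) / r₀ + (4 / 3) * Λ ^ 2 * r₀ := by
  have h1 : r₀ ≤ ℓ - r₀ := by linarith
  have h2 : ℓ - r₀ ≤ ℓ := by linarith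
  have hr0 : (0:ℝ) ≤ r₀ := hr₀.le
  have hr2 : (0:ℝ) ≠ r₀ ^ 2 := by positivity
  -- continuity / integrability on subintervals
  have hsub : ∀ a b : ℝ, 0 ≤ a → b ≤ ℓ → a ≤ b → uIcc a b ⊆ Icc 0 ℓ := by
    intro a b ha hb hab
    rw [uIcc_of_le hab]
    exact Icc_subset_Icc ha hb
  have hRi : ∀ a b : ℝ, 0 ≤ a → b ≤ ℓ → a ≤ b →
      IntervalIntegrable R MeasureTheory.volume a b := by
    intro a b ha hb hab
    exact (hRcont.mono (hsub a b ha hb hab)).intervalIntegrable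
  have hfi : ∀ (g : ℝ → ℝ) (a b : ℝ), Continuous g → 0 ≤ a → b ≤ ℓ → a ≤ b →
      IntervalIntegrable (fun s => g s * R s) MeasureTheory.volume a b := by
    intro g a b hg ha hb hab
    exact ((hg.continuousOn.mul (hRcont.mono (hsub a b ha hb hab)))).intervalIntegrable
  have hg1 : Continuous (fun s : ℝ => s ^ 2 / r₀ ^ 2) := (continuous_pow 2).div_const _
  have hg3 : Continuous (fun s : ℝ => (ℓ - s) ^ 2 / r₀ ^ 2) :=
    (((continuous_const.sub continuous_id).pow 2)).div_const _
  have hc1 : Continuous (fun s : ℝ => 1 - s ^ 2 / r₀ ^ 2) := continuous_const.sub hg1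
  have hc3 : Continuous (fun s : ℝ => 1 - (ℓ - s) ^ 2 / r₀ ^ 2) := continuous_const.sub hg3
  have hd1 : Continuous (fun s : ℝ => Λ ^ 2 / r₀ ^ 2 * s ^ 2) :=
    continuous_const.mul (continuous_pow 2)
  have hd3 : Continuous (fun s : ℝ => Λ ^ 2 / r₀ ^ 2 * (ℓ - s) ^ 2) :=
    continuous_const.mul ((continuous_const.sub continuous_id).pow 2)
  have iR1 := hRi 0 r₀ le_rfl (by linarith) hr0
  have iR2 := hRi r₀ (ℓ - r₀) hr0 h2 h1
  have iR3 := hRi (ℓ - r₀) ℓ (by linarith) le_rfl h2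
  have iI1 := hfi _ 0 r₀ hg1 le_rfl (by linarith) hr0
  have iI3 := hfi _ (ℓ - r₀) ℓ hg3 (by linarith) le_rfl h2
  -- split the integral
  have hsplit : (∫ s in (0:ℝ)..ℓ, R s)
      = (∫ s in (0:ℝ)..r₀, R s) + (∫ s in r₀..(ℓ - r₀), R s)
        + ∫ s in (ℓ - r₀)..ℓ, R s := by
    rw [add_assoc, integral_add_adjacent_intervals iR2 iR3,
      integral_add_adjacent_intervals iR1 (iR2.trans iR3)]
  -- rewrite the first and third integrals in hineq
  have eA : (∫ s in (0:ℝ)..r₀, (((n : ℝ) - 1) / r₀ ^ 2 - s ^ 2 / r₀ ^ 2 * R s))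
      = ((n:ℝ) - 1) / r₀ - ∫ s in (0:ℝ)..r₀, s ^ 2 / r₀ ^ 2 * R s := by
    rw [integral_sub intervalIntegrable_const iI1, integral_const]
    have : (r₀ - 0) • (((n:ℝ) - 1) / r₀ ^ 2) = ((n:ℝ) - 1) / r₀ := by
      have hne : r₀ ≠ 0 := hr₀.ne'
      rw [smul_eq_mul]; field_simp; ring
    rw [this]
  have eC : (∫ s in (ℓ - r₀)..ℓ, (((n : ℝ) - 1) / r₀ ^ 2 - (ℓ - s) ^ 2 / r₀ ^ 2 * R s))
      = ((n:ℝ) - 1) / r₀ - ∫ s in (ℓ - r₀)..ℓ, (ℓ - s) ^ 2 / r₀ ^ 2 * R s := by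
    rw [integral_sub intervalIntegrable_const iI3, integral_const]
    have : (ℓ - (ℓ - r₀)) • (((n:ℝ) - 1) / r₀ ^ 2) = ((n:ℝ) - 1) / r₀ := by
      have hne : r₀ ≠ 0 := hr₀.ne'
      rw [smul_eq_mul]; field_simp; ring
    rw [this]
  rw [eA, eC] at hineq
  -- first boundary estimate
  have hB1 : (∫ s in (0:ℝ)..r₀, R s) - (∫ s in (0:ℝ)..r₀, s ^ 2 / r₀ ^ 2 * R s)
      ≤ (2/3) * Λ ^ 2 * r₀ := by
    have e1 : (∫ s in (0:ℝ)..r₀, R s) - (∫ s in (0:ℝ)..r₀, s ^ 2 / r₀ ^ 2 * R s)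
        = ∫ s in (0:ℝ)..r₀, (1 - s ^ 2 / r₀ ^ 2) * R s := by
      rw [← integral_sub iR1 iI1]
      congr 1; ext s; ring
    rw [e1]
    have hmono : (∫ s in (0:ℝ)..r₀, (1 - s ^ 2 / r₀ ^ 2) * R s)
        ≤ ∫ s in (0:ℝ)..r₀, (1 - s ^ 2 / r₀ ^ 2) * Λ ^ 2 := by
      apply integral_mono_on hr0
      · exact hfi _ 0 r₀ hc1 le_rfl (by linarith) hr0
      · exact ((hc1.mul continuous_const).intervalIntegrable _ _)
      · intro s hs
        have hfac : 0 ≤ 1 - s ^ 2 / r₀ ^ 2 := by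
          rw [sub_nonneg, div_le_one (by positivity)]
          nlinarith [hs.1, hs.2]
        exact mul_le_mul_of_nonneg_left
          (hRbound s ⟨hs.1, hs.2.trans (by linarith)⟩) hfac
    refine hmono.trans_eq ?_
    have e2 : ∀ s : ℝ, (1 - s ^ 2 / r₀ ^ 2) * Λ ^ 2 = Λ ^ 2 - (Λ ^ 2 / r₀ ^ 2) * s ^ 2 := by
      intro s; field_simp
    simp_rw [e2]
    rw [integral_sub intervalIntegrable_const (hd1.intervalIntegrable _ _),
      integral_const_mul, integral_pow, integral_const]
    field_simp; ring
  -- third boundary estimate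
  have hB3 : (∫ s in (ℓ - r₀)..ℓ, R s) - (∫ s in (ℓ - r₀)..ℓ, (ℓ - s) ^ 2 / r₀ ^ 2 * R s)
      ≤ (2/3) * Λ ^ 2 * r₀ := by
    have e1 : (∫ s in (ℓ - r₀)..ℓ, R s) - (∫ s in (ℓ - r₀)..ℓ, (ℓ - s) ^ 2 / r₀ ^ 2 * R s)
        = ∫ s in (ℓ - r₀)..ℓ, (1 - (ℓ - s) ^ 2 / r₀ ^ 2) * R s := by
      rw [← integral_sub iR3 iI3]
      congr 1; ext s; ring
    rw [e1]
    have hmono : (∫ s in (ℓ - r₀)..ℓ, (1 - (ℓ - s) ^ 2 / r₀ ^ 2) * R s)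
        ≤ ∫ s in (ℓ - r₀)..ℓ, (1 - (ℓ - s) ^ 2 / r₀ ^ 2) * Λ ^ 2 := by
      apply integral_mono_on h2
      · exact hfi _ (ℓ - r₀) ℓ hc3 (by linarith) le_rfl h2
      · exact ((hc3.mul continuous_const).intervalIntegrable _ _)
      · intro s hs
        have hfac : 0 ≤ 1 - (ℓ - s) ^ 2 / r₀ ^ 2 := by
          rw [sub_nonneg, div_le_one (by positivity)]
          nlinarith [hs.1, hs.2]
        exact mul_le_mul_of_nonneg_left
          (hRbound s ⟨(by linarith [hs.1] : (0:ℝ) ≤ s), hs.2⟩) hfac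
    refine hmono.trans_eq ?_
    have e2 : ∀ s : ℝ, (1 - (ℓ - s) ^ 2 / r₀ ^ 2) * Λ ^ 2
        = Λ ^ 2 - (Λ ^ 2 / r₀ ^ 2) * (ℓ - s) ^ 2 := by
      intro s; field_simp
    simp_rw [e2]
    rw [integral_sub intervalIntegrable_const (hd3.intervalIntegrable _ _),
      integral_const_mul, integral_const]
    have hcomp : (∫ s in (ℓ - r₀)..ℓ, (ℓ - s) ^ 2)
        = ∫ x in (ℓ - ℓ)..(ℓ - (ℓ - r₀)), x ^ 2 := by
      exact integral_comp_sub_left (fun x => x ^ 2) ℓ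
    rw [hcomp]
    simp only [sub_self, sub_sub_cancel]
    rw [integral_pow]
    field_simp; ring
  rw [hsplit]
  have h2n : 2 * ((n:ℝ) - 1) / r₀ = ((n:ℝ) - 1) / r₀ + ((n:ℝ) - 1) / r₀ := by ring
  linarith [hineq, hB1, hB3]
end

section
/- Let N ≥ 1 be an integer and κ > 0, and let c : [0,1] → ℝ^N be a twice continuously differentiable curve with c(1) = c(0) and ‖c'(t)‖² ≥ κ for all t ∈ [0,1]. Then there exists t₀ ∈ (0,1) such that ⟨c''(t₀), c(t₀) − c(0)⟩ ≤ −κ; in particular, ‖c''(t₀)‖ · ‖c(t₀) − c(0)‖ ≥ κ. -/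
open Set

/-- Interior maximum argument for closed curves with speed bounded below: if
`c : [0,1] → ℝ^N` is `C²` with `c(1) = c(0)` and `‖c'(t)‖² ≥ κ > 0`, then at some
interior point `t₀` one has `⟨c''(t₀), c(t₀) - c(0)⟩ ≤ -κ`; in particular
`‖c''(t₀)‖·‖c(t₀)-c(0)‖ ≥ κ`. -/
theorem closed_curve_interior_max (N : ℕ) (hN : 1 ≤ N) (κ : ℝ) (hκ : 0 < κ)
    (c c' c'' : ℝ → EuclideanSpace ℝ (Fin N))
    (hc : ∀ t ∈ Icc (0 : ℝ) 1, HasDerivAt c (c' t) t)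
    (hc' : ∀ t ∈ Icc (0 : ℝ) 1, HasDerivAt c' (c'' t) t)
    (hc'' : ContinuousOn c'' (Icc (0 : ℝ) 1))
    (hclosed : c 1 = c 0)
    (hspeed : ∀ t ∈ Icc (0 : ℝ) 1, κ ≤ ‖c' t‖ ^ 2) :
    ∃ t₀ ∈ Ioo (0 : ℝ) 1,
      (inner ℝ (c'' t₀) (c t₀ - c 0) : ℝ) ≤ -κ ∧
      κ ≤ ‖c'' t₀‖ * ‖c t₀ - c 0‖ := by
  set f : ℝ → ℝ := fun t => (inner ℝ (c t - c 0) (c t - c 0) : ℝ) with hf_def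
  set g : ℝ → ℝ := fun t => (inner ℝ (c' t) (c t - c 0) : ℝ) with hg_def
  have hf : ∀ t ∈ Icc (0 : ℝ) 1, HasDerivAt f (2 * g t) t := by
    intro t ht
    have h := ((hc t ht).sub_const (c 0)).inner ℝ ((hc t ht).sub_const (c 0))
    refine h.congr_deriv ?_
    have hcomm := real_inner_comm (c t - c 0) (c' t)
    simp only [hg_def]
    linarith
  have hg : ∀ t ∈ Icc (0 : ℝ) 1,
      HasDerivAt g ((inner ℝ (c'' t) (c t - c 0) : ℝ) + ‖c' t‖ ^ 2) t := by
    intro t ht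
    have h := (hc' t ht).inner ℝ ((hc t ht).sub_const (c 0))
    refine h.congr_deriv ?_
    rw [real_inner_self_eq_norm_sq]
    ring
  have hfc : ContinuousOn f (Icc (0 : ℝ) 1) := fun t ht =>
    (hf t ht).continuousAt.continuousWithinAt
  have hf0 : f 0 = 0 := by simp [hf_def]
  have hf1 : f 1 = 0 := by simp [hf_def, hclosed]
  have hfnn : ∀ t, 0 ≤ f t := fun t => real_inner_self_nonneg
  -- f is not identically zero on [0,1]
  have hex : ∃ t ∈ Icc (0 : ℝ) 1, 0 < f t := by
    by_contra h
    push_neg at h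
    have hfz : ∀ t ∈ Icc (0 : ℝ) 1, c t = c 0 := by
      intro t ht
      have : f t = 0 := le_antisymm (h t ht) (hfnn t)
      have := inner_self_eq_zero.mp this
      rwa [sub_eq_zero] at this
    have hmem : Icc (0 : ℝ) 1 ∈ nhds (1 / 2 : ℝ) := by
      apply Icc_mem_nhds <;> norm_num
    have hconst : HasDerivAt c 0 (1 / 2 : ℝ) := by
      refine (hasDerivAt_const (1 / 2 : ℝ) (c 0)).congr_of_eventuallyEq ?_
      filter_upwards [hmem] with t ht using hfz t ht
    have h12 : (1 / 2 : ℝ) ∈ Icc (0 : ℝ) 1 := by norm_num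
    have hz : c' (1 / 2) = 0 := (hc _ h12).unique hconst
    have hsp := hspeed _ h12
    rw [hz, norm_zero] at hsp
    simp at hsp
    linarith
  obtain ⟨t₁, ht₁, hft₁⟩ := hex
  obtain ⟨t₀, ht₀, hmax⟩ := isCompact_Icc.exists_isMaxOn (nonempty_Icc.mpr zero_le_one) hfc
  have hft₀ : 0 < f t₀ := lt_of_lt_of_le hft₁ (hmax ht₁)
  have ht₀0 : t₀ ≠ 0 := by rintro rfl; rw [hf0] at hft₀; exact lt_irrefl _ hft₀
  have ht₀1 : t₀ ≠ 1 := by rintro rfl; rw [hf1] at hft₀; exact lt_irrefl _ hft₀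
  have ht₀I : t₀ ∈ Ioo (0 : ℝ) 1 :=
    ⟨lt_of_le_of_ne ht₀.1 (Ne.symm ht₀0), lt_of_le_of_ne ht₀.2 ht₀1⟩
  refine ⟨t₀, ht₀I, ?_⟩
  -- derivative vanishes at the interior max
  have hnhds : Icc (0 : ℝ) 1 ∈ nhds t₀ := Icc_mem_nhds ht₀I.1 ht₀I.2
  have hloc : IsLocalMax f t₀ := hmax.isLocalMax hnhds
  have hg0 : g t₀ = 0 := by
    have := hloc.hasDerivAt_eq_zero (hf t₀ ht₀)
    linarith
  -- second derivative is nonpositive at the interior max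
  have hsecond : (inner ℝ (c'' t₀) (c t₀ - c 0) : ℝ) + ‖c' t₀‖ ^ 2 ≤ 0 := by
    by_contra hL
    push_neg at hL
    set L := (inner ℝ (c'' t₀) (c t₀ - c 0) : ℝ) + ‖c' t₀‖ ^ 2 with hLdef
    have hslope : Filter.Tendsto (slope g t₀) (nhdsWithin t₀ {t₀}ᶜ) (nhds L) :=
      hasDerivAt_iff_tendsto_slope.mp (hg t₀ ht₀)
    have hpos : ∀ᶠ t in nhdsWithin t₀ (Ioi t₀), 0 < g t := by
      have h1 : ∀ᶠ t in nhdsWithin t₀ {t₀}ᶜ, 0 < slope g t₀ t :=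
        hslope.eventually (eventually_gt_nhds hL)
      have h2 : nhdsWithin t₀ (Ioi t₀) ≤ nhdsWithin t₀ {t₀}ᶜ :=
        nhdsWithin_mono _ (fun x hx => ne_of_gt hx)
      filter_upwards [h1.filter_mono h2, self_mem_nhdsWithin] with t hts htI
      have hlt : t₀ < t := htI
      rw [slope_def_field] at hts
      have h3 := mul_pos hts (sub_pos.mpr hlt)
      rw [div_mul_cancel₀ _ (by intro h; apply absurd h; linarith : t - t₀ ≠ 0)] at h3
      linarith [hg0]
    obtain ⟨u, hu, husub⟩ := (mem_nhdsGT_iff_exists_Ioo_subset).mp hpos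
    have hu' : t₀ < u := by
      rcases hu with hu
      exact mem_Ioi.mp hu
    set b := min u 1 with hbdef
    have htb : t₀ < b := lt_min hu' ht₀I.2
    set s := (t₀ + b) / 2 with hsdef
    have hts : t₀ < s := by simp [hsdef]; linarith
    have hsb : s < b := by simp [hsdef]; linarith
    have hsu : s < u := lt_of_lt_of_le hsb (min_le_left _ _)
    have hs1 : s ≤ 1 := le_trans hsb.le (min_le_right _ _)
    have hsI : s ∈ Icc (0 : ℝ) 1 := ⟨by linarith [ht₀.1], hs1⟩
    -- mean value theorem on [t₀, s]
    obtain ⟨ξ, hξ, hξeq⟩ := exists_hasDerivAt_eq_slope f (fun t => 2 * g t) hts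
      (hfc.mono (Icc_subset_Icc ht₀.1 hs1))
      (fun x hx => hf x ⟨le_trans ht₀.1 hx.1.le, le_trans hx.2.le hs1⟩)
    have hgξ : 0 < g ξ := husub ⟨hξ.1, lt_trans hξ.2 hsu⟩
    have : 0 < (f s - f t₀) / (s - t₀) := by rw [← hξeq]; linarith
    have hpos' : 0 < f s - f t₀ := by
      have := mul_pos this (sub_pos.mpr hts)
      rwa [div_mul_cancel₀ _ (by linarith : s - t₀ ≠ 0)] at this
    have := hmax hsI
    simp only [IsMaxOn, IsMinOn] at this
    have : f s ≤ f t₀ := hmax hsI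
    linarith
  have hspd := hspeed t₀ ht₀
  have hmain : (inner ℝ (c'' t₀) (c t₀ - c 0) : ℝ) ≤ -κ := by linarith
  refine ⟨hmain, ?_⟩
  have hcs := abs_real_inner_le_norm (c'' t₀) (c t₀ - c 0)
  calc κ ≤ -(inner ℝ (c'' t₀) (c t₀ - c 0) : ℝ) := by linarith
    _ ≤ |(inner ℝ (c'' t₀) (c t₀ - c 0) : ℝ)| := neg_le_abs _
    _ ≤ ‖c'' t₀‖ * ‖c t₀ - c 0‖ := hcs
end

section
/- Let n, m ≥ 1 be integers, Λ > 0, r > 0, and let f : ℝⁿ → ℝᵐ (with Euclidean norms) be twice continuously differentiable on the open ball B(0,r) with Df(0) = 0. Suppose that ‖D²f(x)‖ ≤ (1 + ‖Df(x)‖²)^{3/2} · Λ for all x ∈ B(0,r), where ‖Df(x)‖ and ‖D²f(x)‖ denote the operator norms of the first and second Fréchet derivatives. Then ‖Df(x)‖² / (1 + ‖Df(x)‖²) ≤ Λ² · ‖x‖² for all x ∈ B(0,r). -/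
open Set Metric

set_option maxHeartbeats 1000000

/-- Graphical slope estimate: if `f : ℝⁿ → ℝᵐ` is `C²` on `B(0,r)` with `Df(0) = 0`
and `‖D²f(x)‖ ≤ (1 + ‖Df(x)‖²)^{3/2}·Λ` on `B(0,r)`, then
`‖Df(x)‖²/(1 + ‖Df(x)‖²) ≤ Λ²‖x‖²` on `B(0,r)`. -/
theorem graphical_slope_estimate (n m : ℕ) (hn : 1 ≤ n) (hm : 1 ≤ m)
    (Λ r : ℝ) (hΛ : 0 < Λ) (hr : 0 < r)
    (f : EuclideanSpace ℝ (Fin n) → EuclideanSpace ℝ (Fin m))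
    (hf : ContDiffOn ℝ 2 f (ball (0 : EuclideanSpace ℝ (Fin n)) r))
    (hDf0 : fderiv ℝ f 0 = 0)
    (hD2f : ∀ x ∈ ball (0 : EuclideanSpace ℝ (Fin n)) r,
      ‖fderiv ℝ (fderiv ℝ f) x‖ ≤ (1 + ‖fderiv ℝ f x‖ ^ 2) ^ ((3 : ℝ) / 2) * Λ) :
    ∀ x ∈ ball (0 : EuclideanSpace ℝ (Fin n)) r,
      ‖fderiv ℝ f x‖ ^ 2 / (1 + ‖fderiv ℝ f x‖ ^ 2) ≤ Λ ^ 2 * ‖x‖ ^ 2 := by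
  intro x hx
  set φ := ‖fderiv ℝ f x‖ with hφdef
  have hφ0 : (0:ℝ) ≤ φ := norm_nonneg _
  have h1φ : (0:ℝ) < 1 + φ ^ 2 := by positivity
  set w := Λ * ‖x‖ with hwdef
  have hw0 : (0:ℝ) ≤ w := by positivity
  have hxr : ‖x‖ < r := mem_ball_zero_iff.1 hx
  -- Key: for every v with w < v < 1, we have φ²/(1+φ²) ≤ v².
  have key : ∀ v : ℝ, w < v → v < 1 → φ ^ 2 / (1 + φ ^ 2) ≤ v ^ 2 := by
    intro v hwv hv1
    have hv0 : (0:ℝ) < v := hw0.trans_lt hwv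
    have hs : IsOpen (ball (0 : EuclideanSpace ℝ (Fin n)) r) := isOpen_ball
    have hf1 : ContDiffOn ℝ 1 (fderiv ℝ f) (ball (0 : EuclideanSpace ℝ (Fin n)) r) :=
      hf.fderiv_of_isOpen hs (by norm_num)
    have hmem : ∀ t : ℝ, t ∈ Icc (0:ℝ) 1 → t • x ∈ ball (0 : EuclideanSpace ℝ (Fin n)) r := by
      intro t ht
      rw [mem_ball_zero_iff]
      calc ‖t • x‖ = |t| * ‖x‖ := by rw [norm_smul, Real.norm_eq_abs]
        _ ≤ 1 * ‖x‖ := by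
            have : |t| ≤ 1 := abs_le.2 ⟨by linarith [ht.1], ht.2⟩
            exact mul_le_mul_of_nonneg_right this (norm_nonneg _)
        _ < r := by simpa using hxr
    set g : ℝ → (EuclideanSpace ℝ (Fin n) →L[ℝ] EuclideanSpace ℝ (Fin m)) :=
      fun t => fderiv ℝ f (t • x) with hgdef
    set g' : ℝ → (EuclideanSpace ℝ (Fin n) →L[ℝ] EuclideanSpace ℝ (Fin m)) :=
      fun t => (fderiv ℝ (fderiv ℝ f) (t • x)) x with hg'def
    have hgderiv : ∀ t ∈ Icc (0:ℝ) 1, HasDerivAt g (g' t) t := by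
      intro t ht
      have h1 : HasFDerivAt (fderiv ℝ f) (fderiv ℝ (fderiv ℝ f) (t • x)) (t • x) :=
        ((hf1.differentiableOn one_ne_zero).differentiableAt (hs.mem_nhds (hmem t ht))).hasFDerivAt
      have h2 : HasDerivAt (fun s : ℝ => s • x) x t := by
        simpa using (hasDerivAt_id t).smul_const x
      exact h1.comp_hasDerivAt t h2
    set a : ℝ → ℝ := fun t => 1 - v ^ 2 * t ^ 2 with hadef
    have hapos : ∀ t ∈ Icc (0:ℝ) 1, 0 < a t := by
      intro t ht
      have ht2 : t ^ 2 ≤ 1 := by nlinarith [ht.1, ht.2]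
      have hv2 : v ^ 2 < 1 := by nlinarith
      have h1 : v ^ 2 * t ^ 2 < 1 := by nlinarith [sq_nonneg v]
      simp only [hadef]; linarith
    set B : ℝ → ℝ := fun t => v * t / Real.sqrt (a t) with hBdef
    set B' : ℝ → ℝ := fun t => v / Real.sqrt (a t) ^ 3 with hB'def
    have hBderiv : ∀ t ∈ Icc (0:ℝ) 1, HasDerivAt B (B' t) t := by
      intro t ht
      have hat := hapos t ht
      have hS : (0:ℝ) < Real.sqrt (a t) := Real.sqrt_pos.2 hat
      have hsq2 : Real.sqrt (a t) ^ 2 = a t := Real.sq_sqrt hat.le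
      have h1 : HasDerivAt a (-(2 * v ^ 2 * t)) t := by
        have : HasDerivAt (fun s : ℝ => 1 - v ^ 2 * s ^ 2) (-(2 * v ^ 2 * t)) t := by
          have := ((hasDerivAt_pow 2 t).const_mul (v ^ 2)).const_sub 1
          refine this.congr_deriv ?_
          simp; ring
        exact this
      have h2 : HasDerivAt (fun s => Real.sqrt (a s))
          (1 / (2 * Real.sqrt (a t)) * (-(2 * v ^ 2 * t))) t :=
        (Real.hasDerivAt_sqrt hat.ne').comp t h1
      have h3 : HasDerivAt (fun s : ℝ => v * s) v t := by
        simpa using (hasDerivAt_id t).const_mul v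
      have h4 := h3.div h2 hS.ne'
      refine HasDerivAt.congr_deriv (f := B) h4 ?_
      simp only [hB'def]
      have hnum : v * Real.sqrt (a t) - v * t * (1 / (2 * Real.sqrt (a t)) * -(2 * v ^ 2 * t))
          = v / Real.sqrt (a t) := by
        rw [eq_div_iff hS.ne']
        have hat' : a t = 1 - v ^ 2 * t ^ 2 := rfl
        field_simp
        linear_combination (hsq2.trans hat')
      rw [hnum, div_div]
      congr 1
      ring
    have hgcont : ContinuousOn g (Icc (0:ℝ) 1) :=
      fun t ht => (hgderiv t ht).continuousAt.continuousWithinAt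
    have hBcont : ContinuousOn B (Icc (0:ℝ) 1) :=
      fun t ht => (hBderiv t ht).continuousAt.continuousWithinAt
    have hg0 : ‖g 0‖ ≤ B 0 := by
      simp only [hgdef, hBdef, zero_smul, hDf0]
      simp
    have bound : ∀ t ∈ Ico (0:ℝ) 1, ‖g t‖ = B t → ‖g' t‖ < B' t := by
      intro t ht heq
      have htI : t ∈ Icc (0:ℝ) 1 := ⟨ht.1, ht.2.le⟩
      have hat := hapos t htI
      have hS : (0:ℝ) < Real.sqrt (a t) := Real.sqrt_pos.2 hat
      have hsq2 : Real.sqrt (a t) ^ 2 = a t := Real.sq_sqrt hat.le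
      have h1 : ‖g' t‖ ≤ ‖fderiv ℝ (fderiv ℝ f) (t • x)‖ * ‖x‖ :=
        ContinuousLinearMap.le_opNorm _ x
      have h2 := hD2f (t • x) (hmem t htI)
      have hBt : 1 + (B t) ^ 2 = 1 / a t := by
        simp only [hBdef]
        rw [div_pow, hsq2]
        field_simp
        simp only [hadef]; ring
      have hS3 : Real.sqrt (a t) ^ 3 = (a t) ^ ((3:ℝ)/2) := by
        rw [Real.sqrt_eq_rpow, ← Real.rpow_natCast ((a t) ^ ((1:ℝ)/2)) 3,
          ← Real.rpow_mul hat.le]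
        norm_num
      have hrpow : (1 + (B t) ^ 2) ^ ((3:ℝ)/2) = 1 / Real.sqrt (a t) ^ 3 := by
        rw [hBt, hS3, one_div, one_div, Real.inv_rpow hat.le]
      have hnorm : ‖fderiv ℝ f (t • x)‖ = B t := heq
      have h3 : ‖fderiv ℝ (fderiv ℝ f) (t • x)‖ ≤ (1 / Real.sqrt (a t) ^ 3) * Λ := by
        rw [← hrpow]
        calc ‖fderiv ℝ (fderiv ℝ f) (t • x)‖
            ≤ (1 + ‖fderiv ℝ f (t • x)‖ ^ 2) ^ ((3:ℝ)/2) * Λ := h2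
          _ = (1 + (B t) ^ 2) ^ ((3:ℝ)/2) * Λ := by rw [hnorm]
      have h4 : ‖g' t‖ ≤ (1 / Real.sqrt (a t) ^ 3) * w := by
        calc ‖g' t‖ ≤ ‖fderiv ℝ (fderiv ℝ f) (t • x)‖ * ‖x‖ := h1
          _ ≤ ((1 / Real.sqrt (a t) ^ 3) * Λ) * ‖x‖ :=
              mul_le_mul_of_nonneg_right h3 (norm_nonneg _)
          _ = (1 / Real.sqrt (a t) ^ 3) * w := by rw [hwdef]; ring
      have h5 : (1 / Real.sqrt (a t) ^ 3) * w < (1 / Real.sqrt (a t) ^ 3) * v :=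
        mul_lt_mul_of_pos_left hwv (by positivity)
      calc ‖g' t‖ ≤ (1 / Real.sqrt (a t) ^ 3) * w := h4
        _ < (1 / Real.sqrt (a t) ^ 3) * v := h5
        _ = B' t := by simp only [hB'def]; ring
    have main : ‖g 1‖ ≤ B 1 :=
      image_norm_le_of_norm_deriv_right_lt_deriv_boundary' hgcont
        (fun t ht => (hgderiv t ⟨ht.1, ht.2.le⟩).hasDerivWithinAt) hg0 hBcont
        (fun t ht => (hBderiv t ⟨ht.1, ht.2.le⟩).hasDerivWithinAt) bound
        (right_mem_Icc.2 zero_le_one)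
    have hg1 : g 1 = fderiv ℝ f x := by simp [hgdef]
    have ha1 : a 1 = 1 - v ^ 2 := by simp [hadef]
    have ha1pos : (0:ℝ) < 1 - v ^ 2 := by nlinarith
    have hS1 : Real.sqrt (a 1) ^ 2 = 1 - v ^ 2 := by rw [Real.sq_sqrt (by rw [ha1]; linarith), ha1]
    have hφle : φ ≤ v * 1 / Real.sqrt (a 1) := by
      rw [hφdef, ← hg1]; exact main
    have hS1pos : (0:ℝ) < Real.sqrt (a 1) := Real.sqrt_pos.2 (by rw [ha1]; linarith)
    have hφsq : φ ^ 2 * (1 - v ^ 2) ≤ v ^ 2 := by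
      have h6 : φ ^ 2 ≤ (v * 1 / Real.sqrt (a 1)) ^ 2 := by
        apply pow_le_pow_left₀ hφ0 hφle
      rw [div_pow, hS1] at h6
      rw [le_div_iff₀ ha1pos] at h6
      nlinarith
    rw [div_le_iff₀ h1φ]
    ring_nf at hφsq ⊢
    linarith
  -- Conclude.
  have hRHS : Λ ^ 2 * ‖x‖ ^ 2 = w ^ 2 := by rw [hwdef]; ring
  rw [hRHS]
  have hc1 : φ ^ 2 / (1 + φ ^ 2) < 1 := by rw [div_lt_one h1φ]; linarith
  rcases le_or_gt 1 w with h1w | hw1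
  · nlinarith
  · by_contra hcon
    push_neg at hcon
    set c := φ ^ 2 / (1 + φ ^ 2) with hcdef
    have hc0 : 0 ≤ c := by positivity
    have hws : w < Real.sqrt c := by
      rw [← Real.sqrt_sq hw0]
      exact Real.sqrt_lt_sqrt (by positivity) hcon
    have hsc1 : Real.sqrt c < 1 := by
      rw [show (1:ℝ) = Real.sqrt 1 by simp]
      exact Real.sqrt_lt_sqrt hc0 hc1
    set v := (w + Real.sqrt c) / 2 with hvdef
    have hv1 : w < v := by rw [hvdef]; linarith
    have hv2 : v < Real.sqrt c := by rw [hvdef]; linarith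
    have := key v hv1 (by linarith)
    have hv0 : 0 ≤ v := by linarith
    have : c ≤ v ^ 2 := this
    have hvc : v ^ 2 < c := by
      have h := pow_lt_pow_left₀ hv2 hv0 (two_ne_zero)
      rwa [Real.sq_sqrt hc0] at h
    linarith
end

section
/- Let Λ > 0 and T > 0, and let μ : [0,T] → ℝ be a differentiable function with μ(0) = 0, μ(t) ≥ 0 for all t, and μ'(t) ≤ 2Λ·(1 + μ(t))^{3/2}·μ(t)^{1/2} for all t ∈ [0,T]. Then μ(t)/(1 + μ(t)) ≤ Λ²·t² for all t ∈ [0,T]. -/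
open Set

/-- ODE comparison for the squared slope along a ray: if `μ(0) = 0`, `μ ≥ 0`, and
`μ' ≤ 2Λ(1+μ)^{3/2}·μ^{1/2}` on `[0,T]`, then `μ(t)/(1+μ(t)) ≤ Λ²t²` on `[0,T]`. -/
theorem slope_ode_comparison (Λ T : ℝ) (hΛ : 0 < Λ) (hT : 0 < T)
    (μ μ' : ℝ → ℝ)
    (hderiv : ∀ t ∈ Icc (0 : ℝ) T, HasDerivAt μ (μ' t) t)
    (h0 : μ 0 = 0)
    (hnonneg : ∀ t ∈ Icc (0 : ℝ) T, 0 ≤ μ t)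
    (hineq : ∀ t ∈ Icc (0 : ℝ) T,
      μ' t ≤ 2 * Λ * (1 + μ t) ^ ((3 : ℝ) / 2) * (μ t) ^ ((1 : ℝ) / 2)) :
    ∀ t ∈ Icc (0 : ℝ) T, μ t / (1 + μ t) ≤ Λ ^ 2 * t ^ 2 := by
  intro t ht
  have h1μ : ∀ s ∈ Icc (0 : ℝ) T, (0 : ℝ) < 1 + μ s := fun s hs => by
    linarith [hnonneg s hs]
  have hvnn : ∀ s ∈ Icc (0 : ℝ) T, 0 ≤ μ s / (1 + μ s) := fun s hs =>
    div_nonneg (hnonneg s hs) (h1μ s hs).le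
  have key : ∀ ε > (0 : ℝ), μ t / (1 + μ t) ≤ Λ ^ 2 * t ^ 2 + 2 * Λ * t * ε := by
    intro ε hε
    set ψ : ℝ → ℝ := fun s => Real.sqrt (μ s / (1 + μ s) + ε ^ 2) with hψdef
    have hpos : ∀ s ∈ Icc (0 : ℝ) T, 0 < μ s / (1 + μ s) + ε ^ 2 := fun s hs => by
      have := hvnn s hs; positivity
    have hψderiv : ∀ s ∈ Icc (0 : ℝ) T,
        HasDerivAt ψ ((μ' s / (1 + μ s) ^ 2) / (2 * Real.sqrt (μ s / (1 + μ s) + ε ^ 2))) s := by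
      intro s hs
      have hp := h1μ s hs
      have hv : HasDerivAt (fun u => μ u / (1 + μ u)) (μ' s / (1 + μ s) ^ 2) s := by
        have h := (hderiv s hs).div ((hasDerivAt_const s (1 : ℝ)).add (hderiv s hs)) hp.ne'
        refine h.congr_deriv ?_
        simp only [Pi.add_apply]
        ring
      exact (hv.add_const (ε ^ 2)).sqrt (hpos s hs).ne'
    -- bound the derivative of ψ by Λ
    have hψle : ∀ s ∈ Icc (0 : ℝ) T,
        (μ' s / (1 + μ s) ^ 2) / (2 * Real.sqrt (μ s / (1 + μ s) + ε ^ 2)) ≤ Λ := by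
      intro s hs
      have hp := h1μ s hs
      have ha := hnonneg s hs
      have hq : 0 < Real.sqrt (1 + μ s) := Real.sqrt_pos.2 hp
      have hqs : Real.sqrt (1 + μ s) ^ 2 = 1 + μ s := Real.sq_sqrt hp.le
      have hrpow32 : (1 + μ s) ^ ((3 : ℝ) / 2) = (1 + μ s) * Real.sqrt (1 + μ s) := by
        have : ((3 : ℝ) / 2) = 1 + 1 / 2 := by norm_num
        rw [this, Real.rpow_add hp, Real.rpow_one, ← Real.sqrt_eq_rpow]
      have hrpow12 : (μ s) ^ ((1 : ℝ) / 2) = Real.sqrt (μ s) := (Real.sqrt_eq_rpow _).symm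
      have hm := hineq s hs
      rw [hrpow32, hrpow12] at hm
      -- step 1 : μ' s / (1+μ s)^2 ≤ 2 Λ √(μ s / (1+μ s))
      have hsqrtdiv : Real.sqrt (μ s / (1 + μ s)) = Real.sqrt (μ s) / Real.sqrt (1 + μ s) :=
        Real.sqrt_div ha _
      have step1 : μ' s / (1 + μ s) ^ 2 ≤ 2 * Λ * Real.sqrt (μ s / (1 + μ s)) := by
        rw [div_le_iff₀ (by positivity), hsqrtdiv]
        have hsa : 0 ≤ Real.sqrt (μ s) := Real.sqrt_nonneg _
        calc μ' s ≤ 2 * Λ * ((1 + μ s) * Real.sqrt (1 + μ s)) * Real.sqrt (μ s) := hm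
          _ = 2 * Λ * (Real.sqrt (μ s) / Real.sqrt (1 + μ s)) * (1 + μ s) ^ 2 := by
              field_simp
              linear_combination Real.sqrt (μ s) * hqs
      -- step 2 : √(μ s / (1+μ s)) ≤ √(μ s / (1+μ s) + ε²)
      have step2 : Real.sqrt (μ s / (1 + μ s)) ≤ Real.sqrt (μ s / (1 + μ s) + ε ^ 2) :=
        Real.sqrt_le_sqrt (by nlinarith)
      have hden : 0 < 2 * Real.sqrt (μ s / (1 + μ s) + ε ^ 2) := by
        have := Real.sqrt_pos.2 (hpos s hs); linarith
      rw [div_le_iff₀ hden]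
      calc μ' s / (1 + μ s) ^ 2 ≤ 2 * Λ * Real.sqrt (μ s / (1 + μ s)) := step1
        _ ≤ Λ * (2 * Real.sqrt (μ s / (1 + μ s) + ε ^ 2)) := by nlinarith
    -- monotonicity of g s = Λ s + ε - ψ s on [0, T]
    set g : ℝ → ℝ := fun s => Λ * s + ε - ψ s with hgdef
    have hgderiv : ∀ s ∈ Icc (0 : ℝ) T,
        HasDerivAt g (Λ - (μ' s / (1 + μ s) ^ 2) / (2 * Real.sqrt (μ s / (1 + μ s) + ε ^ 2))) s :=
      fun s hs => by
        have h := (((hasDerivAt_id s).const_mul Λ).add_const ε).sub (hψderiv s hs)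
        simp only [mul_one] at h
        exact h
    have hmono : MonotoneOn g (Icc (0 : ℝ) T) := by
      apply monotoneOn_of_deriv_nonneg (convex_Icc 0 T)
      · exact fun s hs => (hgderiv s hs).continuousAt.continuousWithinAt
      · rw [interior_Icc]
        exact fun s hs => (hgderiv s (Ioo_subset_Icc_self hs)).differentiableAt.differentiableWithinAt
      · rw [interior_Icc]
        intro s hs
        rw [(hgderiv s (Ioo_subset_Icc_self hs)).deriv]
        have := hψle s (Ioo_subset_Icc_self hs)
        linarith
    have h0mem : (0 : ℝ) ∈ Icc (0 : ℝ) T := ⟨le_refl 0, hT.le⟩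
    have hg0 : g 0 ≤ g t := hmono h0mem ht ht.1
    have hψ0 : ψ 0 = ε := by
      simp only [hψdef, h0, zero_div, zero_add]
      exact Real.sqrt_sq hε.le
    have hψt : ψ t ≤ Λ * t + ε := by
      simp only [hgdef, hψ0] at hg0
      linarith
    -- square both sides
    have hψtnn : 0 ≤ ψ t := Real.sqrt_nonneg _
    have hsq : μ t / (1 + μ t) + ε ^ 2 ≤ (Λ * t + ε) ^ 2 := by
      have h1 : ψ t ^ 2 = μ t / (1 + μ t) + ε ^ 2 := Real.sq_sqrt (hpos t ht).le
      nlinarith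
    nlinarith
  -- let ε → 0
  by_contra hcon
  push_neg at hcon
  have hden : (0 : ℝ) < 2 * Λ * t + 1 := by nlinarith [ht.1]
  have hεpos : 0 < (μ t / (1 + μ t) - Λ ^ 2 * t ^ 2) / (2 * Λ * t + 1) :=
    div_pos (by linarith) hden
  have hk := key _ hεpos
  have h2 : 2 * Λ * t * ((μ t / (1 + μ t) - Λ ^ 2 * t ^ 2) / (2 * Λ * t + 1)) <
      μ t / (1 + μ t) - Λ ^ 2 * t ^ 2 := by
    rw [mul_div_assoc', div_lt_iff₀ hden]
    nlinarith [ht.1, hcon]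
  linarith
end

section
/- Let n ≥ 2 be an integer and let λ : Fin n → ℝ satisfy H := ∑ᵢ λᵢ > 0 and ∑ᵢ λᵢ² ≤ H²/(n−1). Then λᵢ ≥ 0 for every i. -/
/-- Algebraic pinching lemma: if `λ₁,…,λₙ` satisfy `H := ∑ λᵢ > 0` and
`∑ λᵢ² ≤ H²/(n-1)`, then every `λᵢ` is nonnegative. -/
theorem pinching_implies_nonneg (n : ℕ) (hn : 2 ≤ n) (l : Fin n → ℝ)
    (hH : 0 < ∑ i, l i)
    (hpinch : ∑ i, (l i) ^ 2 ≤ (∑ i, l i) ^ 2 / ((n : ℝ) - 1)) :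
    ∀ i, 0 ≤ l i := by
  intro i
  by_contra hneg
  push_neg at hneg
  have hn1 : (0:ℝ) < (n:ℝ) - 1 := by
    have : (2:ℝ) ≤ n := by exact_mod_cast hn
    linarith
  have hn2 : (2:ℝ) ≤ (n:ℝ) := by exact_mod_cast hn
  set s := Finset.univ.erase i with hs
  have hsplit : ∑ j, l j = l i + ∑ j ∈ s, l j := by
    rw [hs]; exact (Finset.add_sum_erase _ _ (Finset.mem_univ i)).symm
  have hsplit2 : ∑ j, (l j) ^ 2 = (l i) ^ 2 + ∑ j ∈ s, (l j) ^ 2 := by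
    rw [hs]; exact (Finset.add_sum_erase _ _ (Finset.mem_univ i)).symm
  have hcard : (s.card : ℝ) = (n : ℝ) - 1 := by
    rw [hs, Finset.card_erase_of_mem (Finset.mem_univ i)]
    simp
    have h1 : 1 ≤ n := by omega
    push_cast [Nat.cast_sub h1]
    ring
  have hCS : (∑ j ∈ s, l j) ^ 2 ≤ ((n:ℝ) - 1) * ∑ j ∈ s, (l j) ^ 2 := by
    have := sq_sum_le_card_mul_sum_sq (s := s) (f := l)
    rw [hcard] at this
    exact this
  have hkey : ((n:ℝ) - 1) * ∑ j, (l j) ^ 2 ≤ (∑ j, l j) ^ 2 := by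
    rw [mul_comm]
    exact (le_div_iff₀ hn1).mp hpinch
  rw [hsplit2] at hkey
  rw [hsplit] at hH hkey
  set S := ∑ j ∈ s, l j
  set T := ∑ j ∈ s, (l j) ^ 2
  nlinarith [sq_nonneg (l i), mul_pos (neg_pos.2 hneg) hH, sq_nonneg (l i + S), sq_nonneg S]
end

section
/- Let n ≥ 2 be an integer and let h be a real symmetric n×n matrix with trace H := tr(h) > 0 and squared Frobenius norm ∑_{i,j} h_{ij}² ≤ H²/(n−1). Then h is positive semidefinite. -/
open Matrix Finset

-- numeric lemma
lemma pinch_aux (n : ℕ) (hn : 2 ≤ n) (lam : Fin n → ℝ)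
    (hH : 0 < ∑ i, lam i)
    (hp : ∑ i, lam i ^ 2 ≤ (∑ i, lam i) ^ 2 / ((n : ℝ) - 1)) (k : Fin n) : 0 ≤ lam k := by
  by_contra hk
  push_neg at hk
  set H : ℝ := ∑ i, lam i with hHdef
  have hn1 : (0:ℝ) < (n:ℝ) - 1 := by
    have : (2:ℝ) ≤ n := by exact_mod_cast hn
    linarith
  -- Cauchy–Schwarz on the rest
  have hsplit : ∑ i ∈ univ.erase k, lam i = H - lam k := by
    rw [Finset.sum_erase_eq_sub (mem_univ k)]
  have hcard : (#(univ.erase k) : ℝ) = (n : ℝ) - 1 := by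
    rw [Finset.card_erase_of_mem (mem_univ k)]
    simp [Nat.cast_sub (by omega : 1 ≤ n)]
  have hCS : (H - lam k) ^ 2 ≤ ((n:ℝ) - 1) * ∑ i ∈ univ.erase k, lam i ^ 2 := by
    have := sq_sum_le_card_mul_sum_sq (s := univ.erase k) (f := lam)
    rw [hsplit] at this
    calc (H - lam k)^2 ≤ (#(univ.erase k) : ℝ) * ∑ i ∈ univ.erase k, lam i ^ 2 := by
          exact_mod_cast this
      _ = ((n:ℝ)-1) * ∑ i ∈ univ.erase k, lam i ^ 2 := by rw [hcard]
  have hsq : ∑ i, lam i ^ 2 = lam k ^ 2 + ∑ i ∈ univ.erase k, lam i ^ 2 := by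
    rw [← Finset.add_sum_erase _ _ (mem_univ k)]
  have hrest : (H - lam k)^2 / ((n:ℝ)-1) ≤ ∑ i ∈ univ.erase k, lam i ^ 2 :=
    (div_le_iff₀ hn1).2 (by linarith [hCS])
  have := hp
  rw [hsq] at this
  have key : lam k ^ 2 + (H - lam k)^2 / ((n:ℝ)-1) ≤ H^2 / ((n:ℝ)-1) := by linarith
  -- but lhs - rhs = λ²(1+1/(n-1)) - 2Hλ/(n-1) > 0
  have expand : lam k ^ 2 + (H - lam k)^2 / ((n:ℝ)-1) - H^2/((n:ℝ)-1)
      = (lam k ^2 * ((n:ℝ)-1) + lam k^2 - 2*H*lam k) / ((n:ℝ)-1) := by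
    field_simp
    ring
  have pos : 0 < (lam k ^2 * ((n:ℝ)-1) + lam k^2 - 2*H*lam k) / ((n:ℝ)-1) := by
    apply div_pos _ hn1
    have h2 : 0 < lam k ^ 2 := by nlinarith
    have h1 : 0 < lam k ^2 * ((n:ℝ)-1) := mul_pos h2 hn1
    nlinarith
  linarith [key, expand, pos]

/-- Matrix form of the pinching lemma: a real symmetric matrix `h` with trace
`H > 0` and squared Frobenius norm at most `H²/(n-1)` is positive semidefinite. -/
theorem pinching_implies_posSemidef (n : ℕ) (hn : 2 ≤ n)
    (h : Matrix (Fin n) (Fin n) ℝ) (hsymm : h.IsSymm)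
    (htrace : 0 < h.trace)
    (hpinch : ∑ i, ∑ j, (h i j) ^ 2 ≤ h.trace ^ 2 / ((n : ℝ) - 1)) :
    h.PosSemidef := by
  have hH : h.IsHermitian := by
    rw [Matrix.IsHermitian, Matrix.conjTranspose_eq_transpose_of_trivial]
    exact hsymm
  set U : Matrix (Fin n) (Fin n) ℝ := (hH.eigenvectorUnitary : Matrix (Fin n) (Fin n) ℝ)
  have hspec := hH.spectral_theorem
  rw [Unitary.conjStarAlgAut_apply] at hspec
  have hUU : star U * U = 1 := Unitary.coe_star_mul_self hH.eigenvectorUnitary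
  have htr : h.trace = ∑ i, hH.eigenvalues i := by
    conv_lhs => rw [hspec]
    rw [Matrix.trace_mul_comm, ← Matrix.mul_assoc, hUU, Matrix.one_mul, Matrix.trace_diagonal]
    simp
  have hsq : h * h = U * Matrix.diagonal (fun i => hH.eigenvalues i ^ 2) * star U := by
    conv_lhs => rw [hspec]
    rw [show ∀ (A B C D E F : Matrix (Fin n) (Fin n) ℝ), (A*B*C)*(D*E*F) = A*(B*((C*D)*E))*F from
      fun _ _ _ _ _ _ => by noncomm_ring, hUU, Matrix.one_mul, Matrix.diagonal_mul_diagonal]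
    congr 1
    congr 1
    ext i
    simp [sq]
  have hfrob : ∑ i, ∑ j, (h i j) ^ 2 = ∑ i, hH.eigenvalues i ^ 2 := by
    have h1 : (h * h).trace = ∑ i, ∑ j, (h i j) ^ 2 := by
      simp only [Matrix.trace, Matrix.diag, Matrix.mul_apply]
      refine Finset.sum_congr rfl fun i _ => Finset.sum_congr rfl fun j _ => ?_
      rw [hsymm.apply j i, sq]
    have h2 : (h * h).trace = ∑ i, hH.eigenvalues i ^ 2 := by
      rw [hsq, Matrix.trace_mul_comm, ← Matrix.mul_assoc, hUU, Matrix.one_mul,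
        Matrix.trace_diagonal]
    rw [← h1, h2]
  apply hH.posSemidef_iff_eigenvalues_nonneg.mpr
  apply pinch_aux n hn hH.eigenvalues
  · rwa [← htr]
  · rw [← hfrob, ← htr]; exact hpinch
end
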